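/- Let a multiset $S$ of $n$ items with frequencies $(f_x)$, satisfying $\sum_x f_x^2 \ge n$, be arranged in uniformly random order, and let $F_2^{(t)}$ be the second moment of the frequency vector of the first $t$ items. Then $\Pr[|F_2^{(t)} - \mathbb{E}[F_2^{(t)}]| > 0.01 F_2] \le O(1/\sqrt{n})$, where $F_2 = \sum_x f_x^2$. -/

import Mathlib

open Finset Equiv

lemma key_sub (t n a b : ℕ) (h : t ≤ n) :
    (t - (a+b)) * (n - b) ≤ (t - b) * (n - (a+b)) := by
  rcases Nat.le_total t (a+b) with h1 | h1
  · simp [Nat.sub_eq_zero_of_le h1]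
  · have hb : b ≤ t := le_trans (Nat.le_add_left b a) h1
    have h2 : a + b ≤ n := le_trans h1 h
    have hbn : b ≤ n := le_trans (Nat.le_add_left b a) h2
    zify [h1, h2, hb, hbn]
    nlinarith [Nat.zero_le a, Nat.zero_le b, h]

lemma df_ineq (t n : ℕ) (h : t ≤ n) (a b : ℕ) :
    t.descFactorial (a+b) * (n.descFactorial a * n.descFactorial b) ≤
      t.descFactorial a * t.descFactorial b * n.descFactorial (a+b) := by
  induction b with
  | zero => simp [Nat.mul_comm]
  | succ b ih =>
      have hk := key_sub t n a b h
      calc t.descFactorial (a+(b+1)) * (n.descFactorial a * n.descFactorial (b+1))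
          = ((t - (a+b)) * (n - b)) *
              (t.descFactorial (a+b) * (n.descFactorial a * n.descFactorial b)) := by
            rw [show a+(b+1) = (a+b)+1 from rfl, Nat.descFactorial_succ, Nat.descFactorial_succ]
            ring
        _ ≤ ((t - b) * (n - (a+b))) *
              (t.descFactorial a * t.descFactorial b * n.descFactorial (a+b)) :=
            Nat.mul_le_mul hk ih
        _ = t.descFactorial a * t.descFactorial (b+1) * n.descFactorial (a+(b+1)) := by
            rw [show a+(b+1) = (a+b)+1 from rfl, Nat.descFactorial_succ, Nat.descFactorial_succ]
            ring

def cnt (n t : ℕ) (S : Finset (Fin n)) : ℕ :=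
  (univ.filter (fun π : Equiv.Perm (Fin n) => ∀ a ∈ S, (π a : ℕ) < t)).card

lemma cnt_congr (n t : ℕ) (S S' : Finset (Fin n)) (h : S.card = S'.card) :
    cnt n t S = cnt n t S' := by
  classical
  have e : {x // x ∈ S} ≃ {x // x ∈ S'} := Finset.equivOfCardEq h
  have hc : Fintype.card {x // ¬ x ∈ S} = Fintype.card {x // ¬ x ∈ S'} := by
    simp only [Fintype.card_subtype_compl, Fintype.card_coe]
    rw [h]
  have fcompl : {x // ¬ x ∈ S} ≃ {x // ¬ x ∈ S'} := Fintype.equivOfCardEq hc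
  set σ : Equiv.Perm (Fin n) := Equiv.subtypeCongr e fcompl with hσ
  have key : ∀ a : Fin n, σ a ∈ S' ↔ a ∈ S := by
    intro a
    by_cases ha : a ∈ S
    · simp only [hσ, Equiv.subtypeCongr, Equiv.trans_apply, Equiv.sumCompl_symm_apply_of_pos ha,
        Equiv.sumCongr_apply, Sum.map_inl, Equiv.sumCompl_apply_inl]
      exact ⟨fun _ => ha, fun _ => (e ⟨a, ha⟩).2⟩
    · simp only [hσ, Equiv.subtypeCongr, Equiv.trans_apply, Equiv.sumCompl_symm_apply_of_neg ha,
        Equiv.sumCongr_apply, Sum.map_inr, Equiv.sumCompl_apply_inr]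
      exact ⟨fun hmem => absurd hmem (fcompl ⟨a, ha⟩).2, fun hmem => absurd hmem ha⟩
  unfold cnt
  apply Finset.card_bij' (i := fun π _ => π * σ⁻¹) (j := fun π _ => π * σ)
  · intro π hπ
    simp only [mem_filter, mem_univ, true_and] at hπ ⊢
    intro a ha
    have : σ⁻¹ a ∈ S := by
      rw [← key (σ⁻¹ a)] at *
      simpa using ha
    simpa using hπ _ this
  · intro π hπ
    simp only [mem_filter, mem_univ, true_and] at hπ ⊢
    intro a ha
    have h2 : σ a ∈ S' := (key a).2 ha
    simpa using hπ _ h2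
  · intro π _; simp [mul_assoc]
  · intro π _; simp [mul_assoc]

lemma card_under (n t : ℕ) (ht : t ≤ n) (π : Equiv.Perm (Fin n)) :
    (univ.filter (fun a : Fin n => (π a : ℕ) < t)).card = t := by
  have h1 : (univ.filter (fun a : Fin n => (π a : ℕ) < t)).card
      = (univ.filter (fun b : Fin n => (b : ℕ) < t)).card := by
    apply Finset.card_bij' (i := fun a _ => π a) (j := fun b _ => π.symm b)
    · intro a ha; simp only [mem_filter, mem_univ, true_and] at ha ⊢; exact ha
    · intro b hb; simp only [mem_filter, mem_univ, true_and] at hb ⊢; simpa using hb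
    · intro a _; simp
    · intro b _; simp
  rw [h1]
  have h2 : (univ.filter (fun b : Fin n => (b : ℕ) < t)) =
      (Finset.range t).attachFin (fun m hm => lt_of_lt_of_le (Finset.mem_range.mp hm) ht) := by
    ext b
    simp [Finset.mem_attachFin]
  rw [h2, Finset.card_attachFin, Finset.card_range]

lemma cnt_formula (n t : ℕ) (ht : t ≤ n) (S : Finset (Fin n)) :
    cnt n t S * n.choose S.card = n.factorial * t.choose S.card := by
  classical
  set m := S.card with hm
  have hsum : ∑ S' ∈ Finset.powersetCard m (univ : Finset (Fin n)), cnt n t S'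
      = n.factorial * t.choose m := by
    have step : ∀ S' ∈ Finset.powersetCard m (univ : Finset (Fin n)),
        cnt n t S' = ∑ π : Equiv.Perm (Fin n),
          (if ∀ a ∈ S', (π a : ℕ) < t then 1 else 0) := by
      intro S' _
      rw [cnt, Finset.card_filter]
    rw [Finset.sum_congr rfl step, Finset.sum_comm]
    have inner : ∀ π : Equiv.Perm (Fin n),
        (∑ S' ∈ Finset.powersetCard m (univ : Finset (Fin n)),
          (if ∀ a ∈ S', (π a : ℕ) < t then 1 else 0)) = t.choose m := by
      intro π
      rw [← Finset.card_filter]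
      have : (Finset.powersetCard m (univ : Finset (Fin n))).filter
            (fun S' => ∀ a ∈ S', (π a : ℕ) < t)
          = Finset.powersetCard m (univ.filter (fun a : Fin n => (π a : ℕ) < t)) := by
        ext S'
        simp only [Finset.mem_filter, Finset.mem_powersetCard, Finset.subset_iff,
          Finset.mem_filter, Finset.mem_univ, true_and]
        tauto
      rw [this, Finset.card_powersetCard, card_under n t ht π]
    rw [Finset.sum_congr rfl (fun π _ => inner π)]
    rw [Finset.sum_const, Finset.card_univ, Fintype.card_perm, Fintype.card_fin, smul_eq_mul]
  have hsum2 : ∑ S' ∈ Finset.powersetCard m (univ : Finset (Fin n)), cnt n t S'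
      = n.choose m * cnt n t S := by
    have : ∀ S' ∈ Finset.powersetCard m (univ : Finset (Fin n)), cnt n t S' = cnt n t S := by
      intro S' hS'
      exact cnt_congr n t S' S (by rw [(Finset.mem_powersetCard.mp hS').2, hm])
    rw [Finset.sum_congr rfl this, Finset.sum_const, Finset.card_powersetCard,
      Finset.card_univ, Fintype.card_fin, smul_eq_mul]
  rw [mul_comm]
  rw [← hsum2, hsum]

noncomputable def prob (n t m : ℕ) : ℝ := (t.choose m : ℝ) / (n.choose m : ℝ)

lemma prob_nonneg (n t m : ℕ) : 0 ≤ prob n t m := by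
  unfold prob; positivity

lemma prob_le_one (n t m : ℕ) (ht : t ≤ n) : prob n t m ≤ 1 := by
  unfold prob
  rcases Nat.eq_zero_or_pos (n.choose m) with h | h
  · simp [h]
  · rw [div_le_one (by exact_mod_cast h)]
    exact_mod_cast Nat.choose_le_choose m ht

lemma prob_eq_df (n t m : ℕ) : prob n t m
    = (t.descFactorial m : ℝ) / (n.descFactorial m : ℝ) := by
  unfold prob
  rw [Nat.descFactorial_eq_factorial_mul_choose, Nat.descFactorial_eq_factorial_mul_choose]
  push_cast
  rw [mul_div_mul_left]
  exact_mod_cast (Nat.factorial_pos m).ne'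

lemma prob_mul (n t a b : ℕ) (ht : t ≤ n) (hab : a + b ≤ n) :
    prob n t (a + b) ≤ prob n t a * prob n t b := by
  rw [prob_eq_df, prob_eq_df, prob_eq_df]
  have ha : 0 < (n.descFactorial a : ℝ) := by
    exact_mod_cast Nat.pos_of_ne_zero (fun hz => absurd (Nat.descFactorial_eq_zero_iff_lt.mp hz) (not_lt.mpr (le_trans (Nat.le_add_right a b) hab)))
  have hb : 0 < (n.descFactorial b : ℝ) := by
    exact_mod_cast Nat.pos_of_ne_zero (fun hz => absurd (Nat.descFactorial_eq_zero_iff_lt.mp hz) (not_lt.mpr (le_trans (Nat.le_add_left b a) hab)))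
  have hab' : 0 < (n.descFactorial (a+b) : ℝ) := by
    exact_mod_cast Nat.pos_of_ne_zero (fun hz => absurd (Nat.descFactorial_eq_zero_iff_lt.mp hz) (not_lt.mpr hab))
  rw [div_mul_div_comm, div_le_div_iff₀ hab' (by positivity)]
  have := df_ineq t n ht a b
  have : (t.descFactorial (a+b) * (n.descFactorial a * n.descFactorial b) : ℝ)
      ≤ (t.descFactorial a * t.descFactorial b * n.descFactorial (a+b) : ℝ) := by
    exact_mod_cast this
  nlinarith [this]

lemma cnt_eq_prob (n t : ℕ) (ht : t ≤ n) (S : Finset (Fin n)) :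
    (cnt n t S : ℝ) = (n.factorial : ℝ) * prob n t S.card := by
  have hle : S.card ≤ n := by
    simpa using Finset.card_le_card (Finset.subset_univ S)
  have hpos : 0 < (n.choose S.card : ℝ) := by
    exact_mod_cast Nat.choose_pos hle
  have := cnt_formula n t ht S
  have h2 : (cnt n t S : ℝ) * (n.choose S.card : ℝ)
      = (n.factorial : ℝ) * (t.choose S.card : ℝ) := by exact_mod_cast this
  unfold prob
  field_simp
  linarith [h2]

set_option maxHeartbeats 2000000 in
lemma main_aux (n t : ℕ) (α : Type) [Fintype α] [DecidableEq α]
    (c : Fin n → α) (f : α → ℕ) (X : Equiv.Perm (Fin n) → ℝ)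
    (hX : ∀ π, X π = ∑ x : α,
      ((Finset.univ.filter (fun i => c i = x ∧ (π i : ℕ) < t)).card : ℝ) ^ 2)
    (hn : 2 ≤ n) (ht : t ≤ n)
    (hf : ∀ x, f x = (Finset.univ.filter (fun i => c i = x)).card)
    (hF2 : (n : ℝ) ≤ ∑ x, (f x : ℝ) ^ 2) :
    (((Finset.univ.filter (fun π : Equiv.Perm (Fin n) =>
        0.01 * (∑ x, (f x : ℝ) ^ 2) <
          |X π - (∑ π' : Equiv.Perm (Fin n), X π') / (Nat.factorial n : ℝ)|)).card : ℝ)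
        / (Nat.factorial n : ℝ)) ≤ 40000 / Real.sqrt n := by
  classical
  set F2 : ℝ := ∑ x, (f x : ℝ) ^ 2 with hF2d
  set K : ℝ := (Nat.factorial n : ℝ) with hKd
  have hKpos : 0 < K := by rw [hKd]; exact_mod_cast Nat.factorial_pos n
  set μ : ℝ := (∑ π' : Equiv.Perm (Fin n), X π') / K with hμd
  set P : Finset (Fin n × Fin n) := univ.filter (fun p => c p.1 = c p.2) with hPd
  set Z : Finset (Fin n) → Equiv.Perm (Fin n) → ℝ :=
    fun S π => if ∀ a ∈ S, (π a : ℕ) < t then 1 else 0 with hZd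
  -- basic facts about Z
  have hZpair : ∀ (p : Fin n × Fin n) (π : Equiv.Perm (Fin n)),
      Z {p.1, p.2} π = if (π p.1 : ℕ) < t ∧ (π p.2 : ℕ) < t then (1:ℝ) else 0 := by
    intro p π
    by_cases h1 : (π p.1 : ℕ) < t <;> by_cases h2 : (π p.2 : ℕ) < t <;>
      simp [hZd, Finset.mem_insert, h1, h2]
  have hZunion : ∀ (S T : Finset (Fin n)) (π : Equiv.Perm (Fin n)),
      Z (S ∪ T) π = Z S π * Z T π := by
    intro S T π
    simp only [hZd, Finset.forall_mem_union, ite_and]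
    by_cases h1 : ∀ a ∈ S, (π a : ℕ) < t
    · by_cases h2 : ∀ a ∈ T, (π a : ℕ) < t
      · simp only [if_pos h1, if_pos h2, mul_one]
      · simp only [if_pos h1, if_neg h2, mul_zero, one_mul, zero_mul, ite_self]
    · simp only [if_neg h1, mul_zero, zero_mul, one_mul, mul_one, ite_self]
  have hZsum : ∀ S : Finset (Fin n),
      (∑ π : Equiv.Perm (Fin n), Z S π) = (cnt n t S : ℝ) := by
    intro S
    simp only [hZd]
    rw [Finset.sum_boole]
    rfl
  -- Step 1 : X as a sum of pair indicators
  have hstep1 : ∀ π : Equiv.Perm (Fin n), X π = ∑ p ∈ P, Z {p.1, p.2} π := by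
    intro π
    have hset : (univ.filter (fun p : Fin n × Fin n =>
          c p.1 = c p.2 ∧ ((π p.1 : ℕ) < t ∧ (π p.2 : ℕ) < t)))
        = univ.biUnion (fun x : α =>
            (univ.filter fun i => c i = x ∧ (π i : ℕ) < t) ×ˢ
            (univ.filter fun i => c i = x ∧ (π i : ℕ) < t)) := by
      ext p
      simp only [mem_filter, mem_univ, true_and, mem_biUnion, mem_product]
      constructor
      · rintro ⟨h1, h2, h3⟩
        exact ⟨c p.1, ⟨⟨rfl, h2⟩, ⟨h1.symm, h3⟩⟩⟩
      · rintro ⟨x, ⟨hx1, h2⟩, hx2, h3⟩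
        exact ⟨hx1.trans hx2.symm, h2, h3⟩
    have hdisj : ∀ x ∈ (univ : Finset α), ∀ y ∈ (univ : Finset α), x ≠ y →
        Disjoint
          ((univ.filter fun i => c i = x ∧ (π i : ℕ) < t) ×ˢ
            (univ.filter fun i => c i = x ∧ (π i : ℕ) < t))
          ((univ.filter fun i => c i = y ∧ (π i : ℕ) < t) ×ˢ
            (univ.filter fun i => c i = y ∧ (π i : ℕ) < t)) := by
      intro x _ y _ hxy
      rw [Finset.disjoint_left]
      intro p hp hq
      simp only [mem_product, mem_filter, mem_univ, true_and] at hp hq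
      exact hxy (hp.1.1.symm.trans hq.1.1)
    have hcard : X π = ((univ.biUnion (fun x : α =>
            (univ.filter fun i => c i = x ∧ (π i : ℕ) < t) ×ˢ
            (univ.filter fun i => c i = x ∧ (π i : ℕ) < t))).card : ℝ) := by
      rw [Finset.card_biUnion hdisj, hX]
      push_cast
      refine Finset.sum_congr rfl fun x _ => ?_
      rw [Finset.card_product]
      push_cast
      ring
    rw [hcard, ← hset]
    have : ∀ p ∈ P, Z {p.1, p.2} π
        = if (π p.1 : ℕ) < t ∧ (π p.2 : ℕ) < t then (1:ℝ) else 0 :=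
      fun p _ => hZpair p π
    rw [Finset.sum_congr rfl this, Finset.sum_boole, hPd, Finset.filter_filter]
  -- sums over permutations
  have hsumX : (∑ π : Equiv.Perm (Fin n), X π) = ∑ p ∈ P, (cnt n t {p.1, p.2} : ℝ) := by
    rw [Finset.sum_congr rfl (fun π _ => hstep1 π), Finset.sum_comm]
    exact Finset.sum_congr rfl fun p _ => hZsum _
  have hsumX2 : (∑ π : Equiv.Perm (Fin n), (X π) ^ 2)
      = ∑ p ∈ P, ∑ q ∈ P, (cnt n t ({p.1, p.2} ∪ {q.1, q.2}) : ℝ) := by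
    have hsq : ∀ π : Equiv.Perm (Fin n),
        (X π) ^ 2 = ∑ p ∈ P, ∑ q ∈ P, Z ({p.1, p.2} ∪ {q.1, q.2}) π := by
      intro π
      rw [hstep1 π, sq, Finset.sum_mul_sum]
      exact Finset.sum_congr rfl fun p _ =>
        Finset.sum_congr rfl fun q _ => (hZunion _ _ π).symm
    rw [Finset.sum_congr rfl (fun π _ => hsq π), Finset.sum_comm]
    refine Finset.sum_congr rfl fun p _ => ?_
    rw [Finset.sum_comm]
    exact Finset.sum_congr rfl fun q _ => hZsum _
  -- mean
  have hμ_eq : μ = ∑ p ∈ P, prob n t ({p.1, p.2} : Finset (Fin n)).card := by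
    rw [hμd, hsumX, Finset.sum_congr rfl (fun p _ => cnt_eq_prob n t ht _), ← Finset.mul_sum,
      ← hKd]
    field_simp
  -- variance identity
  have hcardP : ((univ : Finset (Equiv.Perm (Fin n))).card : ℝ) = K := by
    rw [Finset.card_univ, Fintype.card_perm, Fintype.card_fin, hKd]
  have hXsum' : (∑ π : Equiv.Perm (Fin n), X π) = K * μ := by
    rw [hμd]; field_simp
  have hvar : (∑ π : Equiv.Perm (Fin n), (X π - μ) ^ 2)
      = (∑ π : Equiv.Perm (Fin n), (X π) ^ 2) - K * μ ^ 2 := by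
    have e1 : ∀ π : Equiv.Perm (Fin n),
        (X π - μ) ^ 2 = (X π) ^ 2 - 2 * μ * X π + μ ^ 2 := fun π => by ring
    rw [Finset.sum_congr rfl (fun π _ => e1 π), Finset.sum_add_distrib,
      Finset.sum_sub_distrib, ← Finset.mul_sum, Finset.sum_const, nsmul_eq_mul, hcardP, hXsum']
    ring
  -- variance bound via negative correlation + overlapping pairs
  set Bad2 : Finset ((Fin n × Fin n) × (Fin n × Fin n)) :=
    (P ×ˢ P).filter (fun r =>
      ¬ Disjoint ({r.1.1, r.1.2} : Finset (Fin n)) {r.2.1, r.2.2}) with hBad2d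
  have hG : (∑ π : Equiv.Perm (Fin n), (X π) ^ 2) - K * μ ^ 2
      = K * ∑ p ∈ P, ∑ q ∈ P,
          (prob n t ({p.1, p.2} ∪ {q.1, q.2} : Finset (Fin n)).card
            - prob n t ({p.1, p.2} : Finset (Fin n)).card
              * prob n t ({q.1, q.2} : Finset (Fin n)).card) := by
    rw [hsumX2, hμ_eq]
    rw [Finset.sum_congr rfl (fun p (_ : p ∈ P) =>
      Finset.sum_congr rfl (fun q (_ : q ∈ P) => cnt_eq_prob n t ht
        ({p.1, p.2} ∪ {q.1, q.2} : Finset (Fin n))))]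
    have hsq2 : (∑ p ∈ P, prob n t ({p.1, p.2} : Finset (Fin n)).card) ^ 2
        = ∑ p ∈ P, ∑ q ∈ P, prob n t ({p.1, p.2} : Finset (Fin n)).card
            * prob n t ({q.1, q.2} : Finset (Fin n)).card := by
      rw [sq, Finset.sum_mul_sum]
    rw [hsq2]
    simp only [Finset.mul_sum, mul_sub, Finset.sum_sub_distrib]
    simp only [← hKd]
  have htermwise : ∀ p ∈ P, ∀ q ∈ P,
      prob n t ({p.1, p.2} ∪ {q.1, q.2} : Finset (Fin n)).card
        - prob n t ({p.1, p.2} : Finset (Fin n)).card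
          * prob n t ({q.1, q.2} : Finset (Fin n)).card
      ≤ (if ¬ Disjoint ({p.1, p.2} : Finset (Fin n)) {q.1, q.2} then (1:ℝ) else 0) := by
    intro p _ q _
    by_cases hd : Disjoint ({p.1, p.2} : Finset (Fin n)) {q.1, q.2}
    · rw [if_neg (not_not_intro hd)]
      rw [Finset.card_union_of_disjoint hd]
      have hcle : ({p.1, p.2} : Finset (Fin n)).card + ({q.1, q.2} : Finset (Fin n)).card ≤ n := by
        rw [← Finset.card_union_of_disjoint hd]
        calc (({p.1, p.2} ∪ {q.1, q.2} : Finset (Fin n))).card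
            ≤ (univ : Finset (Fin n)).card := Finset.card_le_card (Finset.subset_univ _)
          _ = n := by rw [Finset.card_univ, Fintype.card_fin]
      linarith [prob_mul n t _ _ ht hcle]
    · rw [if_pos hd]
      have h1 := prob_le_one n t ({p.1, p.2} ∪ {q.1, q.2} : Finset (Fin n)).card ht
      have h2 := prob_nonneg n t ({p.1, p.2} : Finset (Fin n)).card
      have h3 := prob_nonneg n t ({q.1, q.2} : Finset (Fin n)).card
      nlinarith
  have hGbound : (∑ p ∈ P, ∑ q ∈ P,
      (prob n t ({p.1, p.2} ∪ {q.1, q.2} : Finset (Fin n)).card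
        - prob n t ({p.1, p.2} : Finset (Fin n)).card
          * prob n t ({q.1, q.2} : Finset (Fin n)).card)) ≤ (Bad2.card : ℝ) := by
    have : (Bad2.card : ℝ) = ∑ p ∈ P, ∑ q ∈ P,
        (if ¬ Disjoint ({p.1, p.2} : Finset (Fin n)) {q.1, q.2} then (1:ℝ) else 0) := by
      rw [hBad2d, ← Finset.sum_boole, Finset.sum_product]
    rw [this]
    exact Finset.sum_le_sum fun p hp => Finset.sum_le_sum fun q hq => htermwise p hp q hq
  -- counting overlapping pairs
  set W : Finset (Fin n × Fin n × Fin n) :=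
    univ.filter (fun w => c w.1 = c w.2.1 ∧ c w.1 = c w.2.2) with hWd
  have hWcard : W.card = ∑ x : α, f x ^ 3 := by
    have hset : W = univ.biUnion (fun x : α =>
        (univ.filter fun i => c i = x) ×ˢ
          ((univ.filter fun i => c i = x) ×ˢ (univ.filter fun i => c i = x))) := by
      rw [hWd]
      ext w
      simp only [mem_filter, mem_univ, true_and, mem_biUnion, mem_product]
      constructor
      · rintro ⟨h1, h2⟩
        exact ⟨c w.1, rfl, h1.symm, h2.symm⟩
      · rintro ⟨x, hx1, hx2, hx3⟩
        exact ⟨hx1.trans hx2.symm, hx1.trans hx3.symm⟩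
    have hdisj : ∀ x ∈ (univ : Finset α), ∀ y ∈ (univ : Finset α), x ≠ y →
        Disjoint
          ((univ.filter fun i => c i = x) ×ˢ
            ((univ.filter fun i => c i = x) ×ˢ (univ.filter fun i => c i = x)))
          ((univ.filter fun i => c i = y) ×ˢ
            ((univ.filter fun i => c i = y) ×ˢ (univ.filter fun i => c i = y))) := by
      intro x _ y _ hxy
      rw [Finset.disjoint_left]
      intro w hw hw'
      simp only [mem_product, mem_filter, mem_univ, true_and] at hw hw'
      exact hxy (hw.1.symm.trans hw'.1)
    rw [hset, Finset.card_biUnion hdisj]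
    refine Finset.sum_congr rfl fun x _ => ?_
    rw [Finset.card_product, Finset.card_product, ← hf x]
    ring
  have hmemP : ∀ r ∈ (P ×ˢ P), c r.1.1 = c r.1.2 ∧ c r.2.1 = c r.2.2 := by
    intro r hr
    rw [Finset.mem_product, hPd] at hr
    exact ⟨(Finset.mem_filter.mp hr.1).2, (Finset.mem_filter.mp hr.2).2⟩
  have hE1 : ((P ×ˢ P).filter (fun r => r.1.1 = r.2.1)).card ≤ W.card := by
    apply Finset.card_le_card_of_injOn (fun r => (r.1.1, r.1.2, r.2.2))
    · intro r hr
      obtain ⟨hr1, hr2⟩ := Finset.mem_filter.mp hr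
      obtain ⟨h1, h2⟩ := hmemP r hr1
      rw [Finset.mem_coe, hWd, Finset.mem_filter]
      exact ⟨Finset.mem_univ _, h1, by rw [hr2, h2]⟩
    · rintro ⟨⟨a, b⟩, u, v⟩ hr ⟨⟨a', b'⟩, u', v'⟩ hs heq
      simp only [Finset.coe_filter, Set.mem_setOf_eq] at hr hs
      simp only [Prod.mk.injEq] at heq
      obtain ⟨e1, e2, e3⟩ := heq
      simp only [Prod.mk.injEq]
      exact ⟨⟨e1, e2⟩, hr.2.symm.trans (e1.trans hs.2), e3⟩
  have hE2 : ((P ×ˢ P).filter (fun r => r.1.1 = r.2.2)).card ≤ W.card := by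
    apply Finset.card_le_card_of_injOn (fun r => (r.1.1, r.1.2, r.2.1))
    · intro r hr
      obtain ⟨hr1, hr2⟩ := Finset.mem_filter.mp hr
      obtain ⟨h1, h2⟩ := hmemP r hr1
      rw [Finset.mem_coe, hWd, Finset.mem_filter]
      exact ⟨Finset.mem_univ _, h1, by rw [hr2, ← h2]⟩
    · rintro ⟨⟨a, b⟩, u, v⟩ hr ⟨⟨a', b'⟩, u', v'⟩ hs heq
      simp only [Finset.coe_filter, Set.mem_setOf_eq] at hr hs
      simp only [Prod.mk.injEq] at heq
      obtain ⟨e1, e2, e3⟩ := heq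
      simp only [Prod.mk.injEq]
      exact ⟨⟨e1, e2⟩, e3, hr.2.symm.trans (e1.trans hs.2)⟩
  have hE3 : ((P ×ˢ P).filter (fun r => r.1.2 = r.2.1)).card ≤ W.card := by
    apply Finset.card_le_card_of_injOn (fun r => (r.1.2, r.1.1, r.2.2))
    · intro r hr
      obtain ⟨hr1, hr2⟩ := Finset.mem_filter.mp hr
      obtain ⟨h1, h2⟩ := hmemP r hr1
      rw [Finset.mem_coe, hWd, Finset.mem_filter]
      exact ⟨Finset.mem_univ _, h1.symm, by beta_reduce; rw [hr2, h2]⟩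
    · rintro ⟨⟨a, b⟩, u, v⟩ hr ⟨⟨a', b'⟩, u', v'⟩ hs heq
      simp only [Finset.coe_filter, Set.mem_setOf_eq] at hr hs
      simp only [Prod.mk.injEq] at heq
      obtain ⟨e1, e2, e3⟩ := heq
      simp only [Prod.mk.injEq]
      exact ⟨⟨e2, e1⟩, hr.2.symm.trans (e1.trans hs.2), e3⟩
  have hE4 : ((P ×ˢ P).filter (fun r => r.1.2 = r.2.2)).card ≤ W.card := by
    apply Finset.card_le_card_of_injOn (fun r => (r.1.2, r.1.1, r.2.1))
    · intro r hr
      obtain ⟨hr1, hr2⟩ := Finset.mem_filter.mp hr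
      obtain ⟨h1, h2⟩ := hmemP r hr1
      rw [Finset.mem_coe, hWd, Finset.mem_filter]
      exact ⟨Finset.mem_univ _, h1.symm, by beta_reduce; rw [hr2, ← h2]⟩
    · rintro ⟨⟨a, b⟩, u, v⟩ hr ⟨⟨a', b'⟩, u', v'⟩ hs heq
      simp only [Finset.coe_filter, Set.mem_setOf_eq] at hr hs
      simp only [Prod.mk.injEq] at heq
      obtain ⟨e1, e2, e3⟩ := heq
      simp only [Prod.mk.injEq]
      exact ⟨⟨e2, e1⟩, e3, hr.2.symm.trans (e1.trans hs.2)⟩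
  have hBadsub : Bad2 ⊆
      ((P ×ˢ P).filter (fun r => r.1.1 = r.2.1)) ∪
        (((P ×ˢ P).filter (fun r => r.1.1 = r.2.2)) ∪
          (((P ×ˢ P).filter (fun r => r.1.2 = r.2.1)) ∪
            ((P ×ˢ P).filter (fun r => r.1.2 = r.2.2)))) := by
    intro r hr
    rw [hBad2d, Finset.mem_filter] at hr
    obtain ⟨hr1, hr2⟩ := hr
    rw [Finset.not_disjoint_iff] at hr2
    obtain ⟨a, ha1, ha2⟩ := hr2
    simp only [Finset.mem_insert, Finset.mem_singleton] at ha1 ha2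
    simp only [Finset.mem_union, Finset.mem_filter]
    rcases ha1 with h | h <;> rcases ha2 with h' | h'
    · exact Or.inl ⟨hr1, h ▸ h'⟩
    · exact Or.inr (Or.inl ⟨hr1, h ▸ h'⟩)
    · exact Or.inr (Or.inr (Or.inl ⟨hr1, h ▸ h'⟩))
    · exact Or.inr (Or.inr (Or.inr ⟨hr1, h ▸ h'⟩))
  have hBad2card : Bad2.card ≤ 4 * ∑ x : α, f x ^ 3 := by
    calc Bad2.card ≤ _ := Finset.card_le_card hBadsub
      _ ≤ _ + _ := Finset.card_union_le _ _
      _ ≤ W.card + (W.card + (W.card + W.card)) := by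
          refine Nat.add_le_add hE1 (le_trans (Finset.card_union_le _ _) ?_)
          refine Nat.add_le_add hE2 (le_trans (Finset.card_union_le _ _) ?_)
          exact Nat.add_le_add hE3 hE4
      _ = 4 * W.card := by ring
      _ = 4 * ∑ x : α, f x ^ 3 := by rw [hWcard]
  -- F3 bound
  have hnpos : (0:ℝ) < n := by
    have h2n : (2:ℝ) ≤ n := by exact_mod_cast hn
    linarith
  have hF2pos : 0 < F2 := lt_of_lt_of_le hnpos hF2
  have hsqn : 0 < Real.sqrt n := Real.sqrt_pos.mpr hnpos
  have hF3 : (∑ x : α, (f x : ℝ) ^ 3) ≤ F2 ^ 2 / Real.sqrt n := by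
    have hfx : ∀ x : α, (f x : ℝ) ≤ Real.sqrt F2 := by
      intro x
      rw [Real.le_sqrt (by positivity) (le_of_lt hF2pos)]
      rw [hF2d]
      exact Finset.single_le_sum (f := fun x => ((f x : ℝ))^2)
        (fun y _ => by positivity) (Finset.mem_univ x)
    have h1 : (∑ x : α, (f x : ℝ) ^ 3) ≤ ∑ x : α, (f x : ℝ) ^ 2 * Real.sqrt F2 := by
      refine Finset.sum_le_sum fun x _ => ?_
      have he : (f x : ℝ) ^ 3 = (f x : ℝ)^2 * (f x : ℝ) := by ring
      rw [he]
      exact mul_le_mul_of_nonneg_left (hfx x) (by positivity)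
    have h2 : (∑ x : α, (f x : ℝ) ^ 2 * Real.sqrt F2) = F2 * Real.sqrt F2 := by
      rw [← Finset.sum_mul, ← hF2d]
    have h3 : Real.sqrt F2 ≤ F2 / Real.sqrt n := by
      rw [le_div_iff₀ hsqn]
      calc Real.sqrt F2 * Real.sqrt n ≤ Real.sqrt F2 * Real.sqrt F2 :=
            mul_le_mul_of_nonneg_left (Real.sqrt_le_sqrt hF2) (Real.sqrt_nonneg _)
        _ = F2 := Real.mul_self_sqrt (le_of_lt hF2pos)
    calc (∑ x : α, (f x : ℝ) ^ 3) ≤ F2 * Real.sqrt F2 := h2 ▸ h1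
      _ ≤ F2 * (F2 / Real.sqrt n) := mul_le_mul_of_nonneg_left h3 (le_of_lt hF2pos)
      _ = F2 ^ 2 / Real.sqrt n := by ring
  -- Chebyshev
  set Bad : Finset (Equiv.Perm (Fin n)) :=
    univ.filter (fun π => 0.01 * F2 < |X π - μ|) with hBadd
  clear_value Bad μ K F2
  have cheb : (Bad.card : ℝ) * (0.01 * F2) ^ 2 ≤ ∑ π : Equiv.Perm (Fin n), (X π - μ) ^ 2 := by
    calc (Bad.card : ℝ) * (0.01 * F2) ^ 2 = ∑ _π ∈ Bad, (0.01 * F2) ^ 2 := by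
          rw [Finset.sum_const, nsmul_eq_mul]
      _ ≤ ∑ π ∈ Bad, (X π - μ) ^ 2 := by
          refine Finset.sum_le_sum fun π hπ => ?_
          rw [hBadd, Finset.mem_filter] at hπ
          have hmem := hπ.2
          have h0 : (0:ℝ) ≤ 0.01 * F2 := le_of_lt (mul_pos (by norm_num) hF2pos)
          rw [pow_two, pow_two, ← abs_mul_abs_self (X π - μ)]
          exact mul_self_le_mul_self h0 (le_of_lt hmem)
      _ ≤ ∑ π : Equiv.Perm (Fin n), (X π - μ) ^ 2 :=
          Finset.sum_le_sum_of_subset_of_nonneg (Finset.subset_univ _)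
            (fun _ _ _ => sq_nonneg _)
  -- putting everything together
  have hchain : (Bad.card : ℝ) * (0.01 * F2) ^ 2 ≤ K * (4 * (F2 ^ 2 / Real.sqrt n)) := by
    have hb2' : (Bad2.card : ℝ) ≤ 4 * ∑ x : α, (f x : ℝ) ^ 3 := by
      have hc := hBad2card
      have : ((Bad2.card : ℕ) : ℝ) ≤ ((4 * ∑ x : α, f x ^ 3 : ℕ) : ℝ) := Nat.cast_le.mpr hc
      push_cast at this
      exact this
    have hb2 : (Bad2.card : ℝ) ≤ 4 * (F2 ^ 2 / Real.sqrt n) := by linarith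
    calc (Bad.card : ℝ) * (0.01 * F2) ^ 2 ≤ ∑ π : Equiv.Perm (Fin n), (X π - μ) ^ 2 := cheb
      _ = (∑ π : Equiv.Perm (Fin n), (X π) ^ 2) - K * μ ^ 2 := hvar
      _ = K * ∑ p ∈ P, ∑ q ∈ P,
          (prob n t ({p.1, p.2} ∪ {q.1, q.2} : Finset (Fin n)).card
            - prob n t ({p.1, p.2} : Finset (Fin n)).card
              * prob n t ({q.1, q.2} : Finset (Fin n)).card) := hG
      _ ≤ K * (Bad2.card : ℝ) := mul_le_mul_of_nonneg_left hGbound (le_of_lt hKpos)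
      _ ≤ K * (4 * (F2 ^ 2 / Real.sqrt n)) := mul_le_mul_of_nonneg_left hb2 (le_of_lt hKpos)
  -- conclude
  show (Bad.card : ℝ) / K ≤ 40000 / Real.sqrt n
  rw [div_le_div_iff₀ hKpos hsqn]
  have hmul : (Bad.card : ℝ) * (0.01 * F2) ^ 2 * Real.sqrt n ≤ K * (4 * F2 ^ 2) := by
    have hstep := mul_le_mul_of_nonneg_right hchain (le_of_lt hsqn)
    have e1 : K * (4 * (F2 ^ 2 / Real.sqrt n)) * Real.sqrt n = K * (4 * F2 ^ 2) := by
      field_simp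
    linarith [e1 ▸ hstep]
  have h001 : ((0.01 : ℝ) * F2) ^ 2 = F2 ^ 2 / 10000 := by norm_num; ring
  nlinarith [hmul, mul_pos hF2pos hF2pos, hKpos,
    mul_nonneg (Nat.cast_nonneg Bad.card) (le_of_lt hsqn)]

/-- Claim 6.3 of the paper: in a uniformly-random-order stream with `∑ f_x² ≥ n`, the
prefix second moment `F₂^{(t)}` deviates from its mean by more than `0.01 F₂` with
probability `O(1/√n)`. Probabilities are computed by counting permutations. -/
theorem prefix_second_moment_concentration :
    ∃ C : ℝ, 0 < C ∧
      ∀ (n t : ℕ) (α : Type) (_ : Fintype α) (_ : DecidableEq α)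
        (c : Fin n → α) (f : α → ℕ),
        2 ≤ n → t ≤ n →
        (∀ x, f x = (Finset.univ.filter (fun i => c i = x)).card) →
        ((n : ℝ) ≤ ∑ x, (f x : ℝ) ^ 2) →
        (((Finset.univ.filter (fun π : Equiv.Perm (Fin n) =>
            0.01 * (∑ x, (f x : ℝ) ^ 2) <
              |(∑ x : α, ((Finset.univ.filter
                    (fun i => c i = x ∧ (π i : ℕ) < t)).card : ℝ) ^ 2)
                - (∑ π' : Equiv.Perm (Fin n), ∑ x : α,
                      ((Finset.univ.filter
                        (fun i => c i = x ∧ (π' i : ℕ) < t)).card : ℝ) ^ 2)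
                    / (Nat.factorial n : ℝ)|)).card : ℝ)
            / (Nat.factorial n : ℝ))
          ≤ C / Real.sqrt n := by
  refine ⟨40000, by norm_num, ?_⟩
  intro n t α _ _ c f hn ht hf hF2
  exact main_aux n t α c f
    (fun π => ∑ x : α,
      ((Finset.univ.filter (fun i => c i = x ∧ (π i : ℕ) < t)).card : ℝ) ^ 2)
    (fun _ => rfl) hn ht hf hF2
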